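/- For every n ≥ 1, the n-th Bernoulli number b_n equals ∑_{r=1}^{n} (−1)^r · n! · ∑_{(n_1,…,n_r): n_i ≥ 1, n_1+⋯+n_r = n} 1/((n_1+1)!·(n_2+1)!⋯(n_r+1)!). -/

import Mathlib

open PowerSeries Finset

-- peel-off lemma for antidiagonalTuple sums
lemma sum_antidiagonalTuple_succ {M : Type*} [AddCommMonoid M] (k n : ℕ)
    (f : (Fin (k+1) → ℕ) → M) :
    ∑ c ∈ Finset.Nat.antidiagonalTuple (k+1) n, f c
      = ∑ ab ∈ Finset.HasAntidiagonal.antidiagonal n,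
          ∑ c ∈ Finset.Nat.antidiagonalTuple k ab.2, f (Fin.cons ab.1 c) := by
  rw [Finset.sum_sigma']
  apply Finset.sum_nbij' (i := fun (c : Fin (k+1) → ℕ) => (⟨(c 0, ∑ i : Fin k, c i.succ), Fin.tail c⟩ :
      (_ : ℕ × ℕ) × (Fin k → ℕ))) (j := fun p => Fin.cons p.1.1 p.2)
  · intro c hc
    rw [Finset.Nat.mem_antidiagonalTuple, Fin.sum_univ_succ] at hc
    simp [Finset.mem_sigma, Finset.Nat.mem_antidiagonalTuple, Fin.tail, hc]
  · intro p hp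
    rw [Finset.mem_sigma, Finset.Nat.mem_antidiagonalTuple, Finset.HasAntidiagonal.mem_antidiagonal] at hp
    rw [Finset.Nat.mem_antidiagonalTuple, Fin.sum_univ_succ]
    simp [hp.2, hp.1]
  · intro c _
    exact Fin.cons_self_tail c
  · intro p hp
    rw [Finset.mem_sigma, Finset.Nat.mem_antidiagonalTuple, Finset.HasAntidiagonal.mem_antidiagonal] at hp
    ext <;> simp [Fin.tail, hp.2]
  · intro c _
    rw [Fin.cons_self_tail]

lemma coeff_pow_tuple (φ : PowerSeries ℚ) (r n : ℕ) :
    PowerSeries.coeff n (φ ^ r)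
      = ∑ c ∈ Finset.Nat.antidiagonalTuple r n, ∏ i, PowerSeries.coeff (c i) φ := by
  induction r generalizing n with
  | zero =>
    cases n with
    | zero => simp
    | succ m => simp [PowerSeries.coeff_one]
  | succ r ih =>
    rw [pow_succ', PowerSeries.coeff_mul, sum_antidiagonalTuple_succ]
    refine Finset.sum_congr rfl fun ab _ => ?_
    rw [ih, Finset.mul_sum]
    refine Finset.sum_congr rfl fun c _ => ?_
    rw [Fin.prod_univ_succ]
    simp [Fin.cons]

noncomputable def G : PowerSeries ℚ :=
  PowerSeries.mk fun k => if k = 0 then 0 else 1 / (k + 1).factorial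

lemma X_mul_one_add_G : (PowerSeries.X : PowerSeries ℚ) * (1 + G) = PowerSeries.exp ℚ - 1 := by
  ext n
  cases n with
  | zero => simp [PowerSeries.coeff_exp, PowerSeries.coeff_one]
  | succ m =>
    rw [PowerSeries.coeff_succ_X_mul]
    rw [map_sub, PowerSeries.coeff_exp]
    cases m with
    | zero => simp [G, PowerSeries.coeff_one]
    | succ l => simp [G, PowerSeries.coeff_one]

lemma B_mul : bernoulliPowerSeries ℚ * (1 + G) = 1 := by
  have h := bernoulliPowerSeries_mul_exp_sub_one ℚ
  rw [← X_mul_one_add_G] at h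
  have : (PowerSeries.X : PowerSeries ℚ) * (bernoulliPowerSeries ℚ * (1 + G))
      = PowerSeries.X * 1 := by ring_nf; rw [mul_comm] at h ⊢; linear_combination h
  exact mul_left_cancel₀ PowerSeries.X_ne_zero this

lemma coeff_B_eq (n : ℕ) :
    PowerSeries.coeff n (bernoulliPowerSeries ℚ)
      = ∑ r ∈ Finset.range (n + 1), PowerSeries.coeff n ((-G) ^ r) := by
  set S : PowerSeries ℚ := ∑ r ∈ Finset.range (n + 1), (-G) ^ r with hS
  have hgeom : S * (1 + G) = 1 - (-G) ^ (n + 1) := by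
    have := geom_sum_mul (-G) (n + 1)
    rw [← hS] at this
    linear_combination -this
  have hSB : S = bernoulliPowerSeries ℚ - bernoulliPowerSeries ℚ * (-G) ^ (n + 1) := by
    calc S = S * (bernoulliPowerSeries ℚ * (1 + G)) := by rw [B_mul, mul_one]
    _ = bernoulliPowerSeries ℚ * (S * (1 + G)) := by ring
    _ = bernoulliPowerSeries ℚ * (1 - (-G) ^ (n + 1)) := by rw [hgeom]
    _ = _ := by ring
  have hdvd : (PowerSeries.X : PowerSeries ℚ) ^ (n + 1)
      ∣ bernoulliPowerSeries ℚ * (-G) ^ (n + 1) := by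
    refine Dvd.dvd.mul_left (pow_dvd_pow_of_dvd ?_ _) _
    rw [PowerSeries.X_dvd_iff]
    simp [G]
  have hc0 : PowerSeries.coeff n (bernoulliPowerSeries ℚ * (-G) ^ (n + 1)) = 0 :=
    (PowerSeries.X_pow_dvd_iff.mp hdvd) n (Nat.lt_succ_self n)
  rw [← map_sum, ← hS, hSB, map_sub, hc0, sub_zero]



/-- For `n ≥ 1`, `b_n = ∑_{r=1}^n (-1)^r · n! · ∑_{compositions of n into r parts} ∏ 1/(n_i+1)!`. -/
theorem stmt_4 (n : ℕ) (hn : 1 ≤ n) :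
    bernoulli n = ∑ r ∈ Finset.Icc 1 n, (-1 : ℚ) ^ r * (n.factorial : ℚ) *
      ∑ c ∈ (Finset.Nat.antidiagonalTuple r n).filter (fun c => ∀ i, 1 ≤ c i),
        ∏ i, (1 : ℚ) / ((c i + 1).factorial : ℚ) := by

  have hfac : (n.factorial : ℚ) ≠ 0 := Nat.cast_ne_zero.mpr n.factorial_ne_zero
  have hB : PowerSeries.coeff n (bernoulliPowerSeries ℚ) = bernoulli n / n.factorial := by
    simp [bernoulliPowerSeries, PowerSeries.coeff_mk]
  have hkey : ∀ r, PowerSeries.coeff n (G ^ r)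
      = ∑ c ∈ (Finset.Nat.antidiagonalTuple r n).filter (fun c => ∀ i, 1 ≤ c i),
          ∏ i, (1 : ℚ) / ((c i + 1).factorial : ℚ) := by
    intro r
    rw [coeff_pow_tuple, ← Finset.sum_filter_of_ne (p := fun c => ∀ i, 1 ≤ c i)]
    · refine Finset.sum_congr rfl fun c hc => Finset.prod_congr rfl fun i _ => ?_
      rw [Finset.mem_filter] at hc
      have : c i ≠ 0 := by have := hc.2 i; omega
      simp [G, this]
    · intro c _ hne i
      by_contra h
      have h0 : c i = 0 := by omega
      exact hne (Finset.prod_eq_zero (Finset.mem_univ i) (by simp [G, h0]))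
  have hneg : ∀ r, PowerSeries.coeff n ((-G) ^ r)
      = (-1 : ℚ) ^ r * PowerSeries.coeff n (G ^ r) := by
    intro r
    rw [neg_pow, show ((-1 : PowerSeries ℚ) ^ r) = PowerSeries.C ((-1 : ℚ) ^ r) by
      rw [map_pow, map_neg, map_one], PowerSeries.coeff_C_mul]
  have h0 : PowerSeries.coeff n ((-G) ^ 0) = 0 := by
    rw [pow_zero, PowerSeries.coeff_one, if_neg (by omega)]
  have hrange : Finset.range (n + 1) = insert 0 (Finset.Icc 1 n) := by
    ext x; simp; omega
  have := coeff_B_eq n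
  rw [hB, hrange, Finset.sum_insert (by simp), h0, zero_add] at this
  rw [div_eq_iff hfac] at this
  rw [this, Finset.sum_mul]
  refine Finset.sum_congr rfl fun r _ => ?_
  rw [hneg, hkey]
  ring
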